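/- arXiv:2406.03992 — 10 statements merged into one kernel-verified Lean document; each statement's English description precedes it below -/
import Mathlib

section
/- Let A be an m×n matrix over ℂ, x ∈ ℂⁿ, y ∈ ℂᵐ with ω = y* A x ≠ 0. Then rank(A − ω⁻¹ A x y* A) = rank(A) − 1. -/
open Matrix
/-- Classical Wedderburn rank-one reduction: if ω = y* A x ≠ 0 then
    rank(A − ω⁻¹ A x y* A) = rank A − 1. -/
theorem wedderburn_rank_one_reduction (m n : ℕ)
    (A : Matrix (Fin m) (Fin n) ℂ)
    (x : Matrix (Fin n) (Fin 1) ℂ) (y : Matrix (Fin m) (Fin 1) ℂ)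
    (ω : ℂ) (hω : ω = (yᴴ * A * x) 0 0) (hne : ω ≠ 0) :
    (A - ω⁻¹ • (A * x * yᴴ * A)).rank + 1 = A.rank := by
  set B := A - ω⁻¹ • (A * x * yᴴ * A) with hB
  set x' : Fin n → ℂ := fun i => x i 0 with hx'
  -- key computation
  have key : ∀ v : Fin n → ℂ,
      (A * x * yᴴ * A).mulVec v = ((yᴴ * A).mulVec v 0) • A.mulVec x' := by
    intro v
    funext i
    simp only [mulVec, dotProduct, Matrix.mul_apply, Fin.sum_univ_one, Pi.smul_apply,
      smul_eq_mul, hx']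
    have hs : ∀ k, (∑ j2 : Fin m, (∑ j, A i j * x j 0) * yᴴ 0 j2 * A j2 k) * v k
        = (∑ j, A i j * x j 0) * ((∑ j2, yᴴ 0 j2 * A j2 k) * v k) := by
      intro k
      simp only [Finset.sum_mul, Finset.mul_sum]
      refine Finset.sum_congr rfl fun j2 _ => Finset.sum_congr rfl fun j _ => by ring
    simp only [hs]
    rw [← Finset.mul_sum, mul_comm]
  have hxA : (yᴴ * A).mulVec x' 0 = ω := by
    rw [hω]
    simp only [mulVec, dotProduct, Matrix.mul_apply, hx']
  have hBv : ∀ v, B.mulVec v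
      = A.mulVec v - (ω⁻¹ * (yᴴ * A).mulVec v 0) • A.mulVec x' := by
    intro v
    simp [hB, sub_mulVec, key, smul_smul, Matrix.smul_mulVec]
  have hBx : B.mulVec x' = 0 := by
    rw [hBv, hxA, inv_mul_cancel₀ hne, one_smul, sub_self]
  have hxnot : x' ∉ LinearMap.ker A.mulVecLin := by
    intro h
    have hA0 : A.mulVec x' = 0 := h
    have : (yᴴ * A).mulVec x' = 0 := by
      rw [← Matrix.mulVec_mulVec, hA0, Matrix.mulVec_zero]
    rw [this] at hxA
    exact hne (by simp [← hxA])
  have hker : LinearMap.ker B.mulVecLin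
      = LinearMap.ker A.mulVecLin ⊔ Submodule.span ℂ {x'} := by
    apply le_antisymm
    · intro v hv
      have hv0 : B.mulVec v = 0 := hv
      rw [hBv] at hv0
      set c := ω⁻¹ * (yᴴ * A).mulVec v 0 with hc
      have h1 : A.mulVec (v - c • x') = 0 := by
        rw [Matrix.mulVec_sub, Matrix.mulVec_smul]
        exact hv0
      have : v = (v - c • x') + c • x' := by ring_nf
      rw [this]
      exact Submodule.add_mem _ (Submodule.mem_sup_left h1)
        (Submodule.mem_sup_right (Submodule.smul_mem _ c (Submodule.mem_span_singleton_self _)))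
    · rw [sup_le_iff]
      constructor
      · intro v hv
        have hv0 : A.mulVec v = 0 := hv
        show B.mulVec v = 0
        rw [hBv, hv0]
        have : (yᴴ * A).mulVec v = 0 := by
          rw [← Matrix.mulVec_mulVec, hv0, Matrix.mulVec_zero]
        rw [this]
        simp
      · rw [Submodule.span_singleton_le_iff_mem]
        exact hBx
  have hdisj : LinearMap.ker A.mulVecLin ⊓ Submodule.span ℂ {x'} = ⊥ := by
    rw [Submodule.eq_bot_iff]
    rintro v ⟨hv1, hv2⟩
    rcases Submodule.mem_span_singleton.mp hv2 with ⟨c, rfl⟩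
    rcases eq_or_ne c 0 with rfl | hc
    · simp
    · exact absurd ((Submodule.smul_mem_iff _ hc).mp hv1) hxnot
  have hfin : Module.finrank ℂ (LinearMap.ker B.mulVecLin)
      = Module.finrank ℂ (LinearMap.ker A.mulVecLin) + 1 := by
    have h := Submodule.finrank_sup_add_finrank_inf_eq (LinearMap.ker A.mulVecLin)
      (Submodule.span ℂ {x'})
    have hx0 : x' ≠ 0 := fun h0 => hxnot (h0 ▸ Submodule.zero_mem _)
    rw [hdisj, finrank_bot, add_zero, finrank_span_singleton hx0] at h
    rw [hker, h]
  have hrnB := LinearMap.finrank_range_add_finrank_ker B.mulVecLin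
  have hrnA := LinearMap.finrank_range_add_finrank_ker A.mulVecLin
  have hrB : B.rank = Module.finrank ℂ (LinearMap.range B.mulVecLin) := rfl
  have hrA : A.rank = Module.finrank ℂ (LinearMap.range A.mulVecLin) := rfl
  rw [hfin] at hrnB
  omega
end

section
/- Let A ∈ ℂ^{m×n}, X ∈ ℂ^{n×k}, Y ∈ ℂ^{m×k}, and suppose M = Y* A X is invertible (as a k×k matrix). Then rank(A − A X M⁻¹ Y* A) = rank(A) − k. -/
open Matrix

section Aux

variable {R : Type*} [Field R]

/-- The product of two submodules is linearly equivalent to the product type. -/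
def submoduleProdEquiv {M N : Type*} [AddCommGroup M] [AddCommGroup N]
    [Module R M] [Module R N] (p : Submodule R M) (q : Submodule R N) :
    (p.prod q) ≃ₗ[R] p × q where
  toFun x := (⟨x.1.1, x.2.1⟩, ⟨x.1.2, x.2.2⟩)
  invFun x := ⟨(x.1.1, x.2.1), ⟨x.1.2, x.2.2⟩⟩
  map_add' := by intros; rfl
  map_smul' := by intros; rfl
  left_inv := by intro x; rfl
  right_inv := by intro x; rfl

lemma range_prodMap' {M N M' N' : Type*} [AddCommGroup M] [AddCommGroup N]
    [AddCommGroup M'] [AddCommGroup N'] [Module R M] [Module R N] [Module R M'] [Module R N']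
    (f : M →ₗ[R] M') (g : N →ₗ[R] N') :
    LinearMap.range (f.prodMap g) = (LinearMap.range f).prod (LinearMap.range g) := by
  ext ⟨x, y⟩
  constructor
  · rintro ⟨⟨a, b⟩, h⟩
    exact ⟨⟨a, congrArg Prod.fst h⟩, ⟨b, congrArg Prod.snd h⟩⟩
  · rintro ⟨⟨a, ha⟩, ⟨b, hb⟩⟩
    exact ⟨(a, b), Prod.ext ha hb⟩

/-- Rank of a block diagonal matrix is the sum of ranks. -/
lemma rank_fromBlocks_diag {m₁ m₂ n₁ n₂ : Type*}
    [Fintype m₁] [Fintype m₂] [Fintype n₁] [Fintype n₂]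
    (A : Matrix m₁ n₁ R) (D : Matrix m₂ n₂ R) :
    (fromBlocks A 0 0 D).rank = A.rank + D.rank := by
  classical
  let e₁ := LinearEquiv.sumArrowLequivProdArrow n₁ n₂ R R
  let e₂ := LinearEquiv.sumArrowLequivProdArrow m₁ m₂ R R
  have key : (fromBlocks A 0 0 D).mulVecLin =
      (e₂.symm.toLinearMap).comp ((A.mulVecLin.prodMap D.mulVecLin).comp e₁.toLinearMap) := by
    apply LinearMap.ext
    intro v
    simp only [mulVecLin_apply, LinearMap.comp_apply, LinearEquiv.coe_coe, fromBlocks_mulVec]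
    funext i
    cases i <;>
      simp [e₁, e₂, LinearEquiv.sumArrowLequivProdArrow, Equiv.sumArrowEquivProdArrow]
  rw [Matrix.rank, key, LinearMap.range_comp,
    LinearMap.range_comp_of_range_eq_top _ e₁.range, range_prodMap']
  rw [LinearEquiv.finrank_map_eq]
  rw [(submoduleProdEquiv _ _).finrank_eq, Module.finrank_prod]
  rfl

end Aux

/-- Classical block Wedderburn rank reduction: if M = Y* A X is invertible then
    rank(A − A X M⁻¹ Y* A) = rank A − k. -/
theorem wedderburn_block_rank_reduction (m n k : ℕ)
    (A : Matrix (Fin m) (Fin n) ℂ)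
    (X : Matrix (Fin n) (Fin k) ℂ) (Y : Matrix (Fin m) (Fin k) ℂ)
    (M : Matrix (Fin k) (Fin k) ℂ) (hM : M = Yᴴ * A * X) (hinv : IsUnit M) :
    (A - A * X * M⁻¹ * (Yᴴ * A)).rank + k = A.rank := by
  classical
  obtain ⟨iM⟩ := hinv.nonempty_invertible
  letI := iM
  set B : Matrix (Fin m) (Fin n) ℂ := A - A * X * M⁻¹ * (Yᴴ * A) with hB
  set G : Matrix (Fin k ⊕ Fin m) (Fin k ⊕ Fin n) ℂ := fromBlocks M (Yᴴ * A) (A * X) A with hG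
  set P : Matrix (Fin k ⊕ Fin m) (Fin m) ℂ := fromRows Yᴴ 1 with hP
  set Q : Matrix (Fin n) (Fin k ⊕ Fin n) ℂ := fromCols X 1 with hQ
  have hGPQ : G = P * A * Q := by
    rw [hP, hQ, fromRows_mul, fromRows_mul_fromCols]
    simp [hG, hM, Matrix.mul_assoc]
  -- rank G = rank A
  have h1 : G.rank = A.rank := by
    apply le_antisymm
    · rw [hGPQ]
      exact le_trans (rank_mul_le_left (P * A) Q)
        (le_trans (rank_mul_le_right P A) le_rfl)
    · have hA : A = Matrix.fromCols (0 : Matrix (Fin m) (Fin k) ℂ) (1 : Matrix (Fin m) (Fin m) ℂ) * G * Matrix.fromRows (0 : Matrix (Fin k) (Fin n) ℂ) (1 : Matrix (Fin n) (Fin n) ℂ) := by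
        rw [hGPQ, hP, hQ, ← Matrix.mul_assoc, ← Matrix.mul_assoc,
          fromCols_mul_fromRows]
        simp [Matrix.mul_assoc, fromCols_mul_fromRows]
      calc A.rank = (Matrix.fromCols (0 : Matrix (Fin m) (Fin k) ℂ) (1 : Matrix (Fin m) (Fin m) ℂ) * G * Matrix.fromRows (0 : Matrix (Fin k) (Fin n) ℂ) (1 : Matrix (Fin n) (Fin n) ℂ)).rank := by rw [← hA]
        _ ≤ (Matrix.fromCols (0 : Matrix (Fin m) (Fin k) ℂ) (1 : Matrix (Fin m) (Fin m) ℂ) * G).rank := rank_mul_le_left _ _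
        _ ≤ G.rank := rank_mul_le_right _ _
  -- rank G = k + rank B via Schur complement
  have h2 : G.rank = k + B.rank := by
    have hdec := fromBlocks_eq_of_invertible₁₁ M (Yᴴ * A) (A * X) A
    have hinvM : ⅟M = M⁻¹ := invOf_eq_nonsing_inv M
    have hBeq : A - A * X * ⅟M * (Yᴴ * A) = B := by rw [hinvM]
    have hL : IsUnit (fromBlocks (1 : Matrix (Fin k) (Fin k) ℂ) 0
        (A * X * ⅟M) (1 : Matrix (Fin m) (Fin m) ℂ)).det := by
      rw [det_fromBlocks_zero₁₂]; simp
    have hR : IsUnit (fromBlocks (1 : Matrix (Fin k) (Fin k) ℂ) (⅟M * (Yᴴ * A))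
        0 (1 : Matrix (Fin n) (Fin n) ℂ)).det := by
      rw [det_fromBlocks_zero₂₁]; simp
    rw [hG, hdec, Matrix.mul_assoc, rank_mul_eq_right_of_isUnit_det _ _ hL,
      rank_mul_eq_left_of_isUnit_det _ _ hR, hBeq, rank_fromBlocks_diag,
      rank_of_isUnit M hinv]
    simp
  omega
end

section
/- Let A ∈ ℂ^{m×p} and B ∈ ℂ^{m×q} satisfy range(A) ⊕ null(B*) = ℂᵐ (direct sum). Then P = A (B*A)⁺ B* is the (oblique) projection onto range(A) along null(B*); in particular P² = P, range(P) = range(A), and null(P) = null(B*). -/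
open Matrix

/-- `Mp` satisfies the four Penrose conditions for `M`. -/
def IsMoorePenrose {a b : ℕ} (M : Matrix (Fin a) (Fin b) ℂ)
    (Mp : Matrix (Fin b) (Fin a) ℂ) : Prop :=
  M * Mp * M = M ∧ Mp * M * Mp = Mp ∧ (M * Mp)ᴴ = M * Mp ∧ (Mp * M)ᴴ = Mp * M

private lemma eq_zero_of_mulVec_zero {m n : ℕ} (M : Matrix (Fin m) (Fin n) ℂ)
    (h : ∀ x, M *ᵥ x = 0) : M = 0 := by
  ext i j
  simpa using congrFun (h (Pi.single j 1)) i

/-- Projection formula: if range A ⊕ null B* = ℂᵐ then P = A (B*A)⁺ B* is the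
    projection onto range A along null B*. -/
theorem projection_formula (m p q : ℕ)
    (A : Matrix (Fin m) (Fin p) ℂ) (B : Matrix (Fin m) (Fin q) ℂ)
    (hcompl : IsCompl (LinearMap.range A.mulVecLin) (LinearMap.ker Bᴴ.mulVecLin))
    (Mp : Matrix (Fin p) (Fin q) ℂ) (hMp : IsMoorePenrose (Bᴴ * A) Mp)
    (P : Matrix (Fin m) (Fin m) ℂ) (hP : P = A * Mp * Bᴴ) :
    P * P = P ∧
    LinearMap.range P.mulVecLin = LinearMap.range A.mulVecLin ∧
    LinearMap.ker P.mulVecLin = LinearMap.ker Bᴴ.mulVecLin := by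
  obtain ⟨h1, h2, _, _⟩ := hMp
  have hdisj : LinearMap.range A.mulVecLin ⊓ LinearMap.ker Bᴴ.mulVecLin = ⊥ :=
    hcompl.inf_eq_bot
  have hBzero : Bᴴ * (A * Mp * Bᴴ * A - A) = 0 := by
    have h : Bᴴ * (A * Mp * Bᴴ * A) = Bᴴ * A := by
      calc Bᴴ * (A * Mp * Bᴴ * A) = Bᴴ * A * Mp * (Bᴴ * A) := by
            simp only [Matrix.mul_assoc]
        _ = Bᴴ * A := h1
    rw [Matrix.mul_sub, h, sub_self]
  -- key : A * Mp * Bᴴ * A = A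
  have key : A * Mp * Bᴴ * A = A := by
    have hz : A * Mp * Bᴴ * A - A = 0 := by
      apply eq_zero_of_mulVec_zero
      intro x
      have hmem : (A * Mp * Bᴴ * A - A) *ᵥ x ∈
          LinearMap.range A.mulVecLin ⊓ LinearMap.ker Bᴴ.mulVecLin := by
        constructor
        · refine ⟨(Mp * Bᴴ * A) *ᵥ x - x, ?_⟩
          simp [Matrix.mulVecLin_apply, Matrix.sub_mulVec, Matrix.mulVec_sub,
            ← Matrix.mulVec_mulVec, Matrix.mul_assoc]
        · show Bᴴ.mulVecLin _ = 0
          simp [Matrix.mulVecLin_apply, Matrix.mulVec_mulVec, hBzero]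
      rw [hdisj] at hmem
      exact hmem
    exact sub_eq_zero.mp hz
  -- idempotence
  have hPP : P * P = P := by
    rw [hP]
    calc A * Mp * Bᴴ * (A * Mp * Bᴴ) = (A * Mp * Bᴴ * A) * Mp * Bᴴ := by
          simp only [Matrix.mul_assoc]
      _ = A * Mp * Bᴴ := by rw [key]
  refine ⟨hPP, ?_, ?_⟩
  · -- range P = range A
    apply le_antisymm
    · rintro _ ⟨x, rfl⟩
      refine ⟨(Mp * Bᴴ) *ᵥ x, ?_⟩
      simp [Matrix.mulVecLin_apply, Matrix.mulVec_mulVec, hP, Matrix.mul_assoc]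
    · rintro _ ⟨x, rfl⟩
      refine ⟨A *ᵥ x, ?_⟩
      simp only [Matrix.mulVecLin_apply, Matrix.mulVec_mulVec, hP, key]
  · -- ker P = ker Bᴴ
    apply le_antisymm
    · intro x hx
      have hx' : P *ᵥ x = 0 := hx
      -- decompose x
      have hxtop : x ∈ LinearMap.range A.mulVecLin ⊔ LinearMap.ker Bᴴ.mulVecLin := by
        rw [hcompl.sup_eq_top]; trivial
      obtain ⟨a, ⟨y, rfl⟩, n, hn, rfl⟩ := Submodule.mem_sup.mp hxtop
      have hn' : Bᴴ *ᵥ n = 0 := hn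
      have hPn : P *ᵥ n = 0 := by
        rw [hP, ← Matrix.mulVec_mulVec, hn', Matrix.mulVec_zero]
      have hPa : P *ᵥ (A.mulVecLin y) = A *ᵥ y := by
        simp only [Matrix.mulVecLin_apply, Matrix.mulVec_mulVec, hP, key]
      have hAy : A *ᵥ y = 0 := by
        have := hx'
        rw [Matrix.mulVec_add, hPn, add_zero, hPa] at this
        exact this
      show Bᴴ.mulVecLin _ = 0
      simp [Matrix.mulVecLin_apply, Matrix.mulVec_add, hn', hAy]
    · intro x hx
      have hx' : Bᴴ *ᵥ x = 0 := hx
      show P.mulVecLin x = 0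
      simp only [Matrix.mulVecLin_apply, hP, ← Matrix.mulVec_mulVec, hx',
        Matrix.mulVec_zero]
end

section
/- For arbitrary matrices A ∈ ℂ^{m×p} and B ∈ ℂ^{m×q}, the matrix P = A (B*A)⁺ B* satisfies P² = P, rank(P) = rank(B*A), range(P) = range(AA*B), and null(P) = null(A*BB*). -/
open Matrix

lemma range_le_of_eq_mul {a b c : ℕ} (X : Matrix (Fin a) (Fin c) ℂ)
    (Y : Matrix (Fin a) (Fin b) ℂ) (Z : Matrix (Fin b) (Fin c) ℂ)
    (h : X = Y * Z) : LinearMap.range X.mulVecLin ≤ LinearMap.range Y.mulVecLin := by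
  subst h
  rw [Matrix.mulVecLin_mul]
  exact LinearMap.range_comp_le_range _ _

lemma ker_le_of_eq_mul {a b c : ℕ} (X : Matrix (Fin a) (Fin c) ℂ)
    (Y : Matrix (Fin a) (Fin b) ℂ) (Z : Matrix (Fin b) (Fin c) ℂ)
    (h : X = Y * Z) : LinearMap.ker Z.mulVecLin ≤ LinearMap.ker X.mulVecLin := by
  subst h
  rw [Matrix.mulVecLin_mul]
  exact LinearMap.ker_le_ker_comp _ _

/-- For arbitrary A, B: P = A (B*A)⁺ B* is a projection with
    rank P = rank(B*A), range P = range(AA*B) and null P = null(A*BB*). -/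
theorem projection_formula_general (m p q : ℕ)
    (A : Matrix (Fin m) (Fin p) ℂ) (B : Matrix (Fin m) (Fin q) ℂ)
    (Mp : Matrix (Fin p) (Fin q) ℂ) (hMp : IsMoorePenrose (Bᴴ * A) Mp)
    (P : Matrix (Fin m) (Fin m) ℂ) (hP : P = A * Mp * Bᴴ) :
    P * P = P ∧ P.rank = (Bᴴ * A).rank ∧
    LinearMap.range P.mulVecLin = LinearMap.range (A * Aᴴ * B).mulVecLin ∧
    LinearMap.ker P.mulVecLin = LinearMap.ker (Aᴴ * B * Bᴴ).mulVecLin := by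
  obtain ⟨h1, h2, h3, h4⟩ := hMp
  set M : Matrix (Fin q) (Fin p) ℂ := Bᴴ * A with hM
  -- basic conjugate-transpose consequences
  have hMH : Mᴴ = Aᴴ * B := by
    rw [hM, Matrix.conjTranspose_mul, Matrix.conjTranspose_conjTranspose]
  -- Mp = Mᴴ * Mpᴴ * Mp
  have key1 : Mᴴ * Mpᴴ * Mp = Mp := by
    have : Mᴴ * Mpᴴ = Mp * M := by
      rw [← Matrix.conjTranspose_mul]; exact h4
    rw [this]; exact h2
  -- Mp = Mp * Mpᴴ * Mᴴ
  have key2 : Mp * (Mpᴴ * Mᴴ) = Mp := by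
    have : Mpᴴ * Mᴴ = M * Mp := by
      rw [← Matrix.conjTranspose_mul]; exact h3
    rw [this, ← Matrix.mul_assoc]; exact h2
  -- Mᴴ = Mp * M * Mᴴ
  have key3 : Mp * M * Mᴴ = Mᴴ := by
    calc Mp * M * Mᴴ = (Mp * M)ᴴ * Mᴴ := by rw [h4]
      _ = (M * (Mp * M))ᴴ := (Matrix.conjTranspose_mul _ _).symm
      _ = Mᴴ := by rw [← Matrix.mul_assoc, h1]
  -- Mᴴ = Mᴴ * M * Mp
  have key4 : Mᴴ * (M * Mp) = Mᴴ := by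
    calc Mᴴ * (M * Mp) = Mᴴ * (M * Mp)ᴴ := by rw [h3]
      _ = (M * Mp * M)ᴴ := (Matrix.conjTranspose_mul _ _).symm
      _ = Mᴴ := by rw [h1]
  -- idempotency
  have hPP : P * P = P := by
    rw [hP]
    calc A * Mp * Bᴴ * (A * Mp * Bᴴ)
        = A * (Mp * (Bᴴ * A) * Mp) * Bᴴ := by
          simp only [Matrix.mul_assoc]
      _ = A * Mp * Bᴴ := by rw [← hM, h2]
  refine ⟨hPP, ?_, ?_, ?_⟩
  · -- rank
    apply le_antisymm
    · have e : P = A * Mp * (M * (Mp * Bᴴ)) := by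
        rw [hP]
        calc A * Mp * Bᴴ = A * (Mp * M * Mp) * Bᴴ := by rw [h2]
          _ = A * Mp * (M * (Mp * Bᴴ)) := by simp only [Matrix.mul_assoc]
      calc P.rank ≤ (M * (Mp * Bᴴ)).rank := by rw [e]; exact Matrix.rank_mul_le_right _ _
        _ ≤ M.rank := Matrix.rank_mul_le_left _ _
    · have e : M = Bᴴ * (P * A) := by
        rw [hP]
        calc M = M * Mp * M := h1.symm
          _ = Bᴴ * (A * Mp * Bᴴ * A) := by rw [hM]; simp only [Matrix.mul_assoc]
      calc M.rank ≤ (P * A).rank := by rw [e]; exact Matrix.rank_mul_le_right _ _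
        _ ≤ P.rank := Matrix.rank_mul_le_left _ _
  · -- range
    apply le_antisymm
    · apply range_le_of_eq_mul P (A * Aᴴ * B) (Mpᴴ * Mp * Bᴴ)
      rw [hP]
      calc A * Mp * Bᴴ = A * (Mᴴ * Mpᴴ * Mp) * Bᴴ := by rw [key1]
        _ = A * Aᴴ * B * (Mpᴴ * Mp * Bᴴ) := by
            rw [hMH]; simp only [Matrix.mul_assoc]
    · apply range_le_of_eq_mul (A * Aᴴ * B) P (A * Aᴴ * B)
      rw [hP]
      calc A * Aᴴ * B = A * Mᴴ := by rw [hMH, Matrix.mul_assoc]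
        _ = A * (Mp * M * Mᴴ) := by rw [key3]
        _ = A * Mp * Bᴴ * (A * Aᴴ * B) := by
            rw [hMH, hM]; simp only [Matrix.mul_assoc]
  · -- kernel
    apply le_antisymm
    · apply ker_le_of_eq_mul (Aᴴ * B * Bᴴ) (Aᴴ * B * Bᴴ) P
      rw [hP]
      calc Aᴴ * B * Bᴴ = Mᴴ * Bᴴ := by rw [hMH]
        _ = Mᴴ * (M * Mp) * Bᴴ := by rw [key4]
        _ = Aᴴ * B * Bᴴ * (A * Mp * Bᴴ) := by
            rw [hMH, hM]; simp only [Matrix.mul_assoc]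
    · apply ker_le_of_eq_mul P (A * (Mp * Mpᴴ)) (Aᴴ * B * Bᴴ)
      rw [hP]
      calc A * Mp * Bᴴ = A * (Mp * (Mpᴴ * Mᴴ)) * Bᴴ := by rw [key2]
        _ = A * (Mp * Mpᴴ) * (Aᴴ * B * Bᴴ) := by
            rw [hMH]; simp only [Matrix.mul_assoc]
end

section
/- If P, Q ∈ ℂ^{n×n} are orthogonal projections (P² = P = P*, Q² = Q = Q*), then (PQ)⁺ = Q (PQ)⁺ P and (PQ)⁺ is idempotent. -/
open Matrix

/-- For orthogonal projections P, Q: (PQ)⁺ = Q (PQ)⁺ P and (PQ)⁺ is idempotent. -/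
theorem pinv_of_product_of_orthogonal_projections (n : ℕ)
    (P Q : Matrix (Fin n) (Fin n) ℂ)
    (hP : P * P = P) (hP' : Pᴴ = P) (hQ : Q * Q = Q) (hQ' : Qᴴ = Q)
    (R : Matrix (Fin n) (Fin n) ℂ) (hR : IsMoorePenrose (P * Q) R) :
    R = Q * R * P ∧ R * R = R := by
  obtain ⟨h1, h2, h3, h4⟩ := hR
  have key1 : R * (P * Q) = Q * (P * Rᴴ) := by
    conv_lhs => rw [← h4]
    simp [conjTranspose_mul, hP', hQ', mul_assoc]
  have key2 : (P * Q) * R = Rᴴ * (Q * P) := by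
    conv_lhs => rw [← h3]
    simp [conjTranspose_mul, hP', hQ', mul_assoc]
  have hQR : Q * R = R := by
    conv_lhs => rw [← h2]
    rw [key1]
    calc Q * (Q * (P * Rᴴ) * R) = (Q * Q) * (P * Rᴴ * R) := by
          simp [mul_assoc]
      _ = Q * (P * Rᴴ) * R := by rw [hQ]; simp [mul_assoc]
      _ = R * (P * Q) * R := by rw [key1]
      _ = R := h2
  have hRP : R * P = R := by
    calc R * P = R * (P * Q) * R * P := by rw [h2]
      _ = R * (Rᴴ * (Q * P)) * P := by rw [mul_assoc R (P*Q) R, key2]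
      _ = R * Rᴴ * Q * (P * P) := by simp [mul_assoc]
      _ = R * ((P * Q) * R) := by rw [hP, key2]; simp [mul_assoc]
      _ = R := by rw [← mul_assoc]; exact h2
  constructor
  · rw [hQR, hRP]
  · calc R * R = (R * P) * (Q * R) := by rw [hRP, hQR]
      _ = R * (P * Q) * R := by simp [mul_assoc]
      _ = R := h2
end

section
/- Let V, W be subspaces of ℂᵐ with V ⊕ W = ℂᵐ. If P_{W⊥} denotes the orthogonal projection onto the orthogonal complement of W and P_V the orthogonal projection onto V, then (P_{W⊥} P_V)⁺ is the projection onto V along W. -/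
open Matrix

theorem moorePenrose_unique {a b : ℕ} (M : Matrix (Fin a) (Fin b) ℂ)
    (R E : Matrix (Fin b) (Fin a) ℂ) (hR : IsMoorePenrose M R)
    (hE : IsMoorePenrose M E) : R = E := by
  obtain ⟨hR1, hR2, hR3, hR4⟩ := hR
  obtain ⟨hE1, hE2, hE3, hE4⟩ := hE
  have h1 : M * R = M * E := by
    calc M * R = (M * R)ᴴ := hR3.symm
    _ = (M * E * M * R)ᴴ := by rw [hE1]
    _ = ((M * E) * (M * R))ᴴ := by simp only [Matrix.mul_assoc]
    _ = (M * R)ᴴ * (M * E)ᴴ := by rw [conjTranspose_mul]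
    _ = M * R * (M * E) := by rw [hR3, hE3]
    _ = M * R * M * E := by simp only [Matrix.mul_assoc]
    _ = M * E := by rw [hR1]
  have h2 : R * M = E * M := by
    calc R * M = (R * M)ᴴ := hR4.symm
    _ = (R * (M * E * M))ᴴ := by rw [hE1]
    _ = ((R * M) * (E * M))ᴴ := by simp only [Matrix.mul_assoc]
    _ = (E * M)ᴴ * (R * M)ᴴ := by rw [conjTranspose_mul]
    _ = E * M * (R * M) := by rw [hE4, hR4]
    _ = E * (M * R * M) := by simp only [Matrix.mul_assoc]
    _ = E * M := by rw [hR1]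
  calc R = R * M * R := hR2.symm
  _ = E * M * R := by rw [h2]
  _ = E * (M * R) := by rw [Matrix.mul_assoc]
  _ = E * (M * E) := by rw [h1]
  _ = E * M * E := by rw [← Matrix.mul_assoc]
  _ = E := hE2

/-- If V ⊕ W = ℂᵐ, P_V is the orthogonal projection onto V (Hermitian idempotent
    with range V), and P_{W⊥} is the orthogonal projection onto W⊥ (the Hermitian
    idempotent with kernel W), then (P_{W⊥} P_V)⁺ is the projection onto V along W. -/
theorem pinv_gives_oblique_projection (m : ℕ)
    (V W : Submodule ℂ (Fin m → ℂ)) (hVW : IsCompl V W)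
    (PV PWperp : Matrix (Fin m) (Fin m) ℂ)
    (hPV1 : PV * PV = PV) (hPV2 : PVᴴ = PV)
    (hPV3 : LinearMap.range PV.mulVecLin = V)
    (hPW1 : PWperp * PWperp = PWperp) (hPW2 : PWperpᴴ = PWperp)
    (hPW3 : LinearMap.ker PWperp.mulVecLin = W)
    (R : Matrix (Fin m) (Fin m) ℂ) (hR : IsMoorePenrose (PWperp * PV) R) :
    R * R = R ∧ LinearMap.range R.mulVecLin = V ∧ LinearMap.ker R.mulVecLin = W := by
  -- the oblique projection onto V along W as a linear map
  set f : (Fin m → ℂ) →ₗ[ℂ] (Fin m → ℂ) :=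
    V.subtype ∘ₗ (V.projectionOnto W hVW) with hf
  have hfV : ∀ x ∈ V, f x = x := fun x hx => by
    simp [hf, Submodule.projectionOnto_apply_left hVW ⟨x, hx⟩]
  have hfW : ∀ x ∈ W, f x = 0 := fun x hx => by
    simp [hf, Submodule.projectionOnto_apply_of_mem_right hVW hx]
  have hfmem : ∀ x, f x ∈ V := fun x => (V.projectionOnto W hVW x).2
  have hfrange : LinearMap.range f = V := by
    apply le_antisymm
    · rintro _ ⟨x, rfl⟩; exact hfmem x
    · intro x hx; exact ⟨x, hfV x hx⟩
  have hfker : LinearMap.ker f = W := by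
    ext x
    simp only [LinearMap.mem_ker, hf, LinearMap.comp_apply, Submodule.coe_subtype]
    rw [show ((V.projectionOnto W hVW x : (Fin m → ℂ)) = 0 ↔
        V.projectionOnto W hVW x = 0) from Submodule.coe_eq_zero]
    exact Submodule.projectionOnto_apply_eq_zero_iff hVW
  set E : Matrix (Fin m) (Fin m) ℂ := LinearMap.toMatrix' f with hE
  have hEf : E.mulVecLin = f := by
    rw [hE, ← Matrix.toLin'_apply', Matrix.toLin'_toMatrix']
  -- injectivity of mulVecLin on square matrices
  have minj : ∀ A B : Matrix (Fin m) (Fin m) ℂ, A.mulVecLin = B.mulVecLin → A = B := by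
    intro A B h
    apply Matrix.toLin'.injective
    rw [Matrix.toLin'_apply', Matrix.toLin'_apply', h]
  have hp : ∀ x, PV.mulVec x ∈ V := fun x => hPV3 ▸ ⟨x, rfl⟩
  have hpV : ∀ x ∈ V, PV.mulVec x = x := by
    intro x hx
    rw [← hPV3] at hx
    obtain ⟨y, rfl⟩ := hx
    have := congrArg (fun M => Matrix.mulVec M y) hPV1
    simpa [Matrix.mulVec_mulVec] using this
  have hqW : ∀ x ∈ W, PWperp.mulVec x = 0 := by
    intro x hx
    rw [← hPW3] at hx
    simpa using hx
  -- PV * E = E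
  have h1 : PV * E = E := by
    refine minj _ _ ?_
    rw [Matrix.mulVecLin_mul]
    apply LinearMap.ext; intro x
    simp only [LinearMap.comp_apply, Matrix.mulVecLin_apply, hEf]
    exact hpV _ (hfmem x)
  -- E * PV = PV
  have h2 : E * PV = PV := by
    refine minj _ _ ?_
    rw [Matrix.mulVecLin_mul]
    apply LinearMap.ext; intro x
    simp only [LinearMap.comp_apply, Matrix.mulVecLin_apply, hEf]
    exact hfV _ (hp x)
  -- E * PWperp = E
  have h3 : E * PWperp = E := by
    refine minj _ _ ?_
    rw [Matrix.mulVecLin_mul]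
    apply LinearMap.ext; intro x
    simp only [LinearMap.comp_apply, Matrix.mulVecLin_apply, hEf]
    have hw : x - PWperp.mulVec x ∈ W := by
      rw [← hPW3]
      have h5 := congrArg (fun M => Matrix.mulVec M x) hPW1
      simp only [← Matrix.mulVec_mulVec] at h5
      simp [LinearMap.mem_ker, Matrix.mulVecLin_apply, Matrix.mulVec_sub, h5]
    calc f (PWperp.mulVec x) = f x - f (x - PWperp.mulVec x) := by
          rw [map_sub]; abel
      _ = f x := by rw [hfW _ hw, sub_zero]
  -- PWperp * E = PWperp
  have h4 : PWperp * E = PWperp := by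
    refine minj _ _ ?_
    rw [Matrix.mulVecLin_mul]
    apply LinearMap.ext; intro x
    simp only [LinearMap.comp_apply, Matrix.mulVecLin_apply, hEf]
    have hw : f x - x ∈ W := by
      rw [← hfker, LinearMap.mem_ker, map_sub]
      have h5 : f (f x) = f x := hfV _ (hfmem x)
      rw [h5, sub_self]
    calc PWperp.mulVec (f x) = PWperp.mulVec x + PWperp.mulVec (f x - x) := by
          rw [Matrix.mulVec_sub]; abel
      _ = PWperp.mulVec x := by rw [hqW _ hw, add_zero]
  -- E satisfies the Penrose conditions for A = PWperp * PV
  have hAE : PWperp * PV * E = PWperp := by rw [mul_assoc, h1, h4]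
  have hEA : E * (PWperp * PV) = PV := by rw [← mul_assoc, h3, h2]
  have hPen : IsMoorePenrose (PWperp * PV) E := by
    refine ⟨?_, ?_, ?_, ?_⟩
    · rw [hAE, ← mul_assoc, hPW1]
    · rw [hEA, h1]
    · rw [hAE, hPW2]
    · rw [hEA, hPV2]
  have hRE : R = E := moorePenrose_unique _ R E hR hPen
  subst hRE
  refine ⟨?_, ?_, ?_⟩
  · refine minj _ _ ?_
    rw [Matrix.mulVecLin_mul, hEf]
    apply LinearMap.ext; intro x
    exact hfV _ (hfmem x)
  · rw [hEf, hfrange]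
  · rw [hEf, hfker]
end

section
/- Let A ∈ ℂ^{m×n}, X ∈ ℂ^{n×p}, Y ∈ ℂ^{m×q}, and suppose rank(Y*AX) = k. Then rank(A − (AX)(Y*AX)⁺(Y*A)) = rank(A) − k. -/
open Matrix

/-- Generalized Wedderburn rank reduction: if rank(Y*AX) = k then
    rank(A − (AX)(Y*AX)⁺(Y*A)) = rank A − k. -/
theorem generalized_wedderburn_rank_reduction (m n p q k : ℕ)
    (A : Matrix (Fin m) (Fin n) ℂ)
    (X : Matrix (Fin n) (Fin p) ℂ) (Y : Matrix (Fin m) (Fin q) ℂ)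
    (Mp : Matrix (Fin p) (Fin q) ℂ) (hMp : IsMoorePenrose (Yᴴ * A * X) Mp)
    (hk : (Yᴴ * A * X).rank = k) :
    (A - (A * X) * Mp * (Yᴴ * A)).rank + k = A.rank := by
  obtain ⟨h1, h2, -, -⟩ := hMp
  set C : Matrix (Fin n) (Fin m) ℂ := X * Mp * Yᴴ with hC
  set B : Matrix (Fin m) (Fin n) ℂ := A * C * A with hB
  have hBeq : (A * X) * Mp * (Yᴴ * A) = B := by
    simp only [hB, hC, Matrix.mul_assoc]
  rw [hBeq]
  set E : Matrix (Fin m) (Fin n) ℂ := A - B with hE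
  -- Q = A * C is idempotent
  have hQQ : (A * C) * (A * C) = A * C := by
    have h3 : (A * C) * (A * C) = A * X * (Mp * (Yᴴ * A * X) * Mp) * Yᴴ := by
      simp only [hC, Matrix.mul_assoc]
    rw [h3, h2]
    simp only [hC, Matrix.mul_assoc]
  have hQB : (A * C) * B = B := by
    rw [hB, ← Matrix.mul_assoc, hQQ]
  have hQE : (A * C) * E = 0 := by
    rw [hE, Matrix.mul_sub, hQB, ← hB, sub_self]
  -- rank B = k
  have hMeq : Yᴴ * B * X = Yᴴ * A * X := by
    have : Yᴴ * B * X = (Yᴴ * A * X) * Mp * (Yᴴ * A * X) := by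
      simp only [hB, hC, Matrix.mul_assoc]
    rw [this, h1]
  have hrankB : B.rank = k := by
    refine le_antisymm ?_ ?_
    · calc B.rank ≤ ((A * X) * Mp).rank := by rw [← hBeq]; exact rank_mul_le_left _ _
        _ ≤ Mp.rank := rank_mul_le_right _ _
        _ ≤ (Yᴴ * A * X).rank := by
            calc Mp.rank = (Mp * (Yᴴ * A * X) * Mp).rank := by rw [h2]
              _ ≤ (Mp * (Yᴴ * A * X)).rank := rank_mul_le_left _ _
              _ ≤ (Yᴴ * A * X).rank := rank_mul_le_right _ _
        _ = k := hk
    · calc k = (Yᴴ * B * X).rank := by rw [hMeq, hk]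
        _ ≤ (Yᴴ * B).rank := rank_mul_le_left _ _
        _ ≤ B.rank := rank_mul_le_right _ _
  -- range decomposition
  have hsup : LinearMap.range E.mulVecLin ⊔ LinearMap.range B.mulVecLin
      = LinearMap.range A.mulVecLin := by
    apply le_antisymm
    · apply sup_le
      · have : E = A * (1 - C * A) := by
          rw [hE, Matrix.mul_sub, Matrix.mul_one, hB, Matrix.mul_assoc]
        rw [this, Matrix.mulVecLin_mul]
        exact LinearMap.range_comp_le_range _ _
      · have : B = A * (C * A) := by rw [hB, Matrix.mul_assoc]
        rw [this, Matrix.mulVecLin_mul]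
        exact LinearMap.range_comp_le_range _ _
    · rintro v ⟨x, rfl⟩
      have : A.mulVecLin x = E.mulVecLin x + B.mulVecLin x := by
        simp [hE, Matrix.sub_mulVec]
      rw [this]
      exact Submodule.add_mem_sup ⟨x, rfl⟩ ⟨x, rfl⟩
  have hdisj : LinearMap.range E.mulVecLin ⊓ LinearMap.range B.mulVecLin = ⊥ := by
    rw [Submodule.eq_bot_iff]
    rintro v ⟨⟨x, hx⟩, ⟨y, hy⟩⟩
    have hv1 : (A * C).mulVecLin v = 0 := by
      rw [← hx]
      have : (A * C).mulVecLin (E.mulVecLin x) = ((A * C) * E).mulVecLin x := by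
        simp [Matrix.mulVecLin_mul]
      rw [this, hQE]
      simp
    have hv2 : (A * C).mulVecLin v = v := by
      rw [← hy]
      have : (A * C).mulVecLin (B.mulVecLin y) = ((A * C) * B).mulVecLin y := by
        simp [Matrix.mulVecLin_mul]
      rw [this, hQB]
    rw [hv2] at hv1
    exact hv1
  have hfin := Submodule.finrank_sup_add_finrank_inf_eq
    (LinearMap.range E.mulVecLin) (LinearMap.range B.mulVecLin)
  rw [hsup, hdisj] at hfin
  simp only [finrank_bot, add_zero] at hfin
  have hfinal : E.rank + B.rank = A.rank := hfin.symm
  rw [← hrankB]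
  exact hfinal
end

section
/- Let A ∈ ℂ^{m×n}, X ∈ ℂ^{n×p}, Y ∈ ℂ^{m×q}, with rank(Y*AX) = k, and set B = A − (AX)(Y*AX)⁺(Y*A). Then null(B) = null(A) ⊕ range(X (Y*AX)⁺), and in particular range(X (Y*AX)⁺) ∩ null(A) = 0. -/
open Matrix

/-- With B = A − (AX)(Y*AX)⁺(Y*A): null B = null A ⊕ range(X (Y*AX)⁺),
    an internal direct sum. -/
theorem generalized_wedderburn_kernel (m n p q k : ℕ)
    (A : Matrix (Fin m) (Fin n) ℂ)
    (X : Matrix (Fin n) (Fin p) ℂ) (Y : Matrix (Fin m) (Fin q) ℂ)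
    (Mp : Matrix (Fin p) (Fin q) ℂ) (hMp : IsMoorePenrose (Yᴴ * A * X) Mp)
    (hk : (Yᴴ * A * X).rank = k)
    (B : Matrix (Fin m) (Fin n) ℂ) (hB : B = A - (A * X) * Mp * (Yᴴ * A)) :
    LinearMap.ker B.mulVecLin =
      LinearMap.ker A.mulVecLin ⊔ LinearMap.range (X * Mp).mulVecLin ∧
    LinearMap.range (X * Mp).mulVecLin ⊓ LinearMap.ker A.mulVecLin = ⊥ := by
  obtain ⟨h1, h2, h3, h4⟩ := hMp
  have h2' : Mp * (Yᴴ * A * X) * Mp = Mp := h2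
  have keyB : B * (X * Mp) = 0 := by
    rw [hB, Matrix.sub_mul, sub_eq_zero]
    symm
    calc A * X * Mp * (Yᴴ * A) * (X * Mp)
        = A * X * (Mp * (Yᴴ * A * X) * Mp) := by simp only [Matrix.mul_assoc]
      _ = A * X * Mp := by rw [h2']
      _ = A * (X * Mp) := by rw [Matrix.mul_assoc]
  constructor
  · apply le_antisymm
    · intro v hv
      rw [LinearMap.mem_ker, mulVecLin_apply, hB, Matrix.sub_mulVec, sub_eq_zero] at hv
      rw [Submodule.mem_sup]
      refine ⟨v - (X * Mp) *ᵥ ((Yᴴ * A) *ᵥ v), ?_,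
        (X * Mp) *ᵥ ((Yᴴ * A) *ᵥ v), ⟨(Yᴴ * A) *ᵥ v, rfl⟩, by abel⟩
      rw [LinearMap.mem_ker, mulVecLin_apply, mulVec_sub, sub_eq_zero, mulVec_mulVec,
        mulVec_mulVec, show A * (X * Mp) * (Yᴴ * A) = A * X * Mp * (Yᴴ * A) from by
          simp only [Matrix.mul_assoc]]
      exact hv
    · rw [sup_le_iff]
      constructor
      · intro v hv
        rw [LinearMap.mem_ker, mulVecLin_apply] at hv ⊢
        rw [hB, Matrix.sub_mulVec, hv, sub_eq_zero,
          show A * X * Mp * (Yᴴ * A) = (A * X * Mp * Yᴴ) * A from by simp only [Matrix.mul_assoc],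
          ← mulVec_mulVec, hv, mulVec_zero]
      · rintro v ⟨w, rfl⟩
        rw [LinearMap.mem_ker, mulVecLin_apply, mulVecLin_apply, mulVec_mulVec, keyB,
          zero_mulVec]
  · rw [eq_bot_iff]
    rintro u ⟨⟨w, rfl⟩, hk2⟩
    rw [SetLike.mem_coe, LinearMap.mem_ker] at hk2
    simp only [mulVecLin_apply] at hk2 ⊢
    have hMpw : Mp *ᵥ w = 0 := by
      have step : Mp *ᵥ w = (Mp * Yᴴ) *ᵥ (A *ᵥ ((X * Mp) *ᵥ w)) := by
        simp only [mulVec_mulVec]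
        rw [show Mp * Yᴴ * (A * (X * Mp)) = Mp * (Yᴴ * A * X) * Mp from by
          simp only [Matrix.mul_assoc], h2']
      rw [step, hk2, mulVec_zero]
    rw [Submodule.mem_bot, show (X * Mp) *ᵥ w = X *ᵥ (Mp *ᵥ w) from (mulVec_mulVec w X Mp).symm,
      hMpw, mulVec_zero]
end

section
/- Let A ∈ ℂ^{n×n} with A² = A, and let X ∈ ℂ^{n×p}, Y ∈ ℂ^{n×q}. Then B = A − (AX)(Y*AX)⁺(Y*A) satisfies B² = B. That is, the generalized Wedderburn reduction of a projection is a projection. -/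
open Matrix

/-- The generalized Wedderburn reduction of an idempotent matrix is idempotent. -/
theorem reduction_of_projection_is_projection (n p q : ℕ)
    (A : Matrix (Fin n) (Fin n) ℂ) (hA : A * A = A)
    (X : Matrix (Fin n) (Fin p) ℂ) (Y : Matrix (Fin n) (Fin q) ℂ)
    (Mp : Matrix (Fin p) (Fin q) ℂ) (hMp : IsMoorePenrose (Yᴴ * A * X) Mp)
    (B : Matrix (Fin n) (Fin n) ℂ) (hB : B = A - (A * X) * Mp * (Yᴴ * A)) :
    B * B = B := by
  obtain ⟨h1, h2, _, _⟩ := hMp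
  subst hB
  have key : A * X * Mp * (Yᴴ * A) * (A * X * Mp * (Yᴴ * A))
      = A * X * Mp * (Yᴴ * A) := by
    calc A * X * Mp * (Yᴴ * A) * (A * X * Mp * (Yᴴ * A))
        = A * X * (Mp * (Yᴴ * (A * A) * X) * Mp) * (Yᴴ * A) := by
          simp only [Matrix.mul_assoc]
      _ = A * X * Mp * (Yᴴ * A) := by
          rw [hA]
          rw [show Mp * (Yᴴ * A * X) * Mp = Mp from by
            simpa [Matrix.mul_assoc] using h2]
  have hL : A * (A * X * Mp * (Yᴴ * A)) = A * X * Mp * (Yᴴ * A) := by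
    simp only [← Matrix.mul_assoc, hA]
  have hR : A * X * Mp * (Yᴴ * A) * A = A * X * Mp * (Yᴴ * A) := by
    simp only [Matrix.mul_assoc, hA]
  rw [Matrix.sub_mul, Matrix.mul_sub, Matrix.mul_sub, hA, hL, hR, key]
  abel
end

section
/- Let B = A − (AX)(Y*AX)⁺(Y*A) be a generalized Wedderburn reduction of A ∈ ℂ^{m×n}. Then B A⁺ B = B, i.e., B is a {2}-inverse of A⁺. Moreover, A⁺ B A⁺ equals the generalized Wedderburn reduction of A⁺ by the matrices AX and A*Y, namely A⁺ − (A⁺(AX)) ((Y*A) A⁺ (AX))⁺ ((Y*A) A⁺). -/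
open Matrix

lemma mp_unique {a b : ℕ} (M : Matrix (Fin a) (Fin b) ℂ)
    (P Q : Matrix (Fin b) (Fin a) ℂ)
    (hP : IsMoorePenrose M P) (hQ : IsMoorePenrose M Q) : P = Q := by
  obtain ⟨hP1, hP2, hP3, hP4⟩ := hP
  obtain ⟨hQ1, hQ2, hQ3, hQ4⟩ := hQ
  have h1 : M * P = M * Q := by
    calc M * P = (M * Q * M) * P := by rw [hQ1]
    _ = (M * Q) * (M * P) := by rw [Matrix.mul_assoc]
    _ = (M * Q)ᴴ * (M * P)ᴴ := by rw [hQ3, hP3]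
    _ = Qᴴ * (M * P * M)ᴴ := by
        simp only [conjTranspose_mul, Matrix.mul_assoc]
    _ = Qᴴ * Mᴴ := by rw [hP1]
    _ = (M * Q)ᴴ := by rw [conjTranspose_mul]
    _ = M * Q := hQ3
  have h2 : P * M = Q * M := by
    calc P * M = P * (M * Q * M) := by rw [hQ1]
    _ = (P * M) * (Q * M) := by simp only [Matrix.mul_assoc]
    _ = (P * M)ᴴ * (Q * M)ᴴ := by rw [hP4, hQ4]
    _ = (M * (P * M))ᴴ * Qᴴ := by
        simp only [conjTranspose_mul, Matrix.mul_assoc]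
    _ = Mᴴ * Qᴴ := by rw [← Matrix.mul_assoc, hP1]
    _ = (Q * M)ᴴ := by rw [conjTranspose_mul]
    _ = Q * M := hQ4
  calc P = P * M * P := hP2.symm
  _ = P * (M * Q) := by rw [← h1, Matrix.mul_assoc]
  _ = (P * M) * Q := by rw [Matrix.mul_assoc]
  _ = Q * M * Q := by rw [h2]
  _ = Q := hQ2

/-- For B = A − (AX)(Y*AX)⁺(Y*A): B A⁺ B = B, and A⁺ B A⁺ is the generalized
    Wedderburn reduction of A⁺ by the matrices AX and A*Y, i.e.
    A⁺ B A⁺ = A⁺ − (A⁺(AX)) ((Y*A) A⁺ (AX))⁺ ((Y*A) A⁺). -/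
theorem reduction_two_inverse_and_pinv_reduction (m n p q : ℕ)
    (A : Matrix (Fin m) (Fin n) ℂ)
    (X : Matrix (Fin n) (Fin p) ℂ) (Y : Matrix (Fin m) (Fin q) ℂ)
    (Ap : Matrix (Fin n) (Fin m) ℂ) (hA : IsMoorePenrose A Ap)
    (Mp : Matrix (Fin p) (Fin q) ℂ) (hMp : IsMoorePenrose (Yᴴ * A * X) Mp)
    (Np : Matrix (Fin p) (Fin q) ℂ)
    (hNp : IsMoorePenrose ((Yᴴ * A) * Ap * (A * X)) Np)
    (B : Matrix (Fin m) (Fin n) ℂ) (hB : B = A - (A * X) * Mp * (Yᴴ * A)) :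
    B * Ap * B = B ∧
    Ap * B * Ap = Ap - (Ap * (A * X)) * Np * ((Yᴴ * A) * Ap) := by
  have hNM : (Yᴴ * A) * Ap * (A * X) = Yᴴ * A * X := by
    calc (Yᴴ * A) * Ap * (A * X) = Yᴴ * (A * Ap * A) * X := by
          simp only [Matrix.mul_assoc]
    _ = Yᴴ * A * X := by rw [hA.1]
  have hNpMp : Np = Mp := by
    refine mp_unique (Yᴴ * A * X) Np Mp ?_ hMp
    rw [← hNM]; exact hNp
  obtain ⟨hA1, hA2, _, _⟩ := hA
  obtain ⟨hM1, hM2, _, _⟩ := hMp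
  -- key rewrite facts
  have hAApA : ∀ Z : Matrix (Fin n) (Fin p) ℂ, A * Ap * (A * Z) = A * Z := by
    intro Z; rw [← Matrix.mul_assoc, hA1]
  have hAApAX : A * Ap * A * X = A * X := by rw [hA1]
  have hYAApA : Yᴴ * A * Ap * A = Yᴴ * A := by
    calc Yᴴ * A * Ap * A = Yᴴ * (A * Ap * A) := by simp only [Matrix.mul_assoc]
    _ = Yᴴ * A := by rw [hA1]
  constructor
  · subst hB
    have expand : (A - A * X * Mp * (Yᴴ * A)) * Ap * (A - A * X * Mp * (Yᴴ * A))
        = A * Ap * A - A * Ap * (A * X * Mp * (Yᴴ * A))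
          - A * X * Mp * (Yᴴ * A) * Ap * A
          + A * X * Mp * (Yᴴ * A) * Ap * (A * X * Mp * (Yᴴ * A)) := by
      simp only [Matrix.sub_mul, Matrix.mul_sub]
      abel
    rw [expand, hA1]
    have e1 : A * Ap * (A * X * Mp * (Yᴴ * A)) = A * X * Mp * (Yᴴ * A) := by
      calc A * Ap * (A * X * Mp * (Yᴴ * A))
          = A * Ap * (A * X) * Mp * (Yᴴ * A) := by simp only [Matrix.mul_assoc]
      _ = A * X * Mp * (Yᴴ * A) := by rw [hAApA]
    have e2 : A * X * Mp * (Yᴴ * A) * Ap * A = A * X * Mp * (Yᴴ * A) := by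
      calc A * X * Mp * (Yᴴ * A) * Ap * A
          = A * X * Mp * (Yᴴ * A * Ap * A) := by simp only [Matrix.mul_assoc]
      _ = A * X * Mp * (Yᴴ * A) := by rw [hYAApA]
    have e3 : A * X * Mp * (Yᴴ * A) * Ap * (A * X * Mp * (Yᴴ * A))
        = A * X * Mp * (Yᴴ * A) := by
      calc A * X * Mp * (Yᴴ * A) * Ap * (A * X * Mp * (Yᴴ * A))
          = A * X * (Mp * (Yᴴ * A * Ap * A * X) * Mp) * (Yᴴ * A) := by
            simp only [Matrix.mul_assoc]
      _ = A * X * (Mp * (Yᴴ * A * X) * Mp) * (Yᴴ * A) := by rw [hYAApA]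
      _ = A * X * Mp * (Yᴴ * A) := by
            rw [hM2]
    rw [e1, e2, e3]
    abel
  · subst hB
    rw [hNpMp]
    have expand : Ap * (A - A * X * Mp * (Yᴴ * A)) * Ap
        = Ap * A * Ap - Ap * (A * X * Mp * (Yᴴ * A)) * Ap := by
      simp only [Matrix.mul_sub, Matrix.sub_mul]
    rw [expand, hA2]
    congr 1
    simp only [Matrix.mul_assoc]
end
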